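/- There exists a constant C > 0 such that the following holds. Let X be a measurable space, B ≥ 1 a natural number, L ≥ 1 a real number, and let ν be a probability measure on X × Bool. Let F be a nonempty countable set of measurable functions f : X → ℝ with |f x| ≤ L for all x. Let μ̄ > 0, let N ≥ 1, and let G be a finite set of measurable functions g : X → ℝ with |g x| ≤ L for all x, with card(G) ≤ N, such that for every f ∈ F there is g ∈ G with |f x − g x| ≤ μ̄ for all x ∈ X. Then for every δ ∈ (0,1), the product measure ν^B on Fin B → (X × Bool) assigns measure at least 1 − δ to the set of samples ((x₁,y₁), …, (x_B,y_B)) such that for every f ∈ F: ∫ ℓ_CE(f x, y) dν(x, y) ≤ (1/B) ∑_{i=1}^{B} ℓ_CE(f x_i, y_i) + 2·(μ̄ + L·√(2·log N / B)) + C·L·√(log(1/δ)/B). -/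

import Mathlib

open MeasureTheory

/-- A Boolean label viewed as the real number `0` or `1`. -/
noncomputable def bval (b : Bool) : ℝ := if b then 1 else 0

/-- The sigmoid function. -/
noncomputable def sigmoid (t : ℝ) : ℝ := 1 / (1 + Real.exp (-t))

/-- The sigmoid cross-entropy loss of a real-valued score `t` against a
(real-valued) label `y`. -/
noncomputable def lCE (t y : ℝ) : ℝ :=
  -y * Real.log (sigmoid t) - (1 - y) * Real.log (1 - sigmoid t)

section Aux

open Real ProbabilityTheory

noncomputable def softplus (t : ℝ) : ℝ := Real.log (1 + Real.exp t)

lemma one_add_exp_pos (t : ℝ) : 0 < 1 + Real.exp t := by positivity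

lemma softplus_nonneg (t : ℝ) : 0 ≤ softplus t :=
  Real.log_nonneg (by nlinarith [Real.exp_pos t])

lemma continuous_softplus : Continuous softplus :=
  Continuous.log (by fun_prop) fun t => (one_add_exp_pos t).ne' 

lemma softplus_mono : Monotone softplus := fun s t h =>
  Real.log_le_log (one_add_exp_pos s) (by simpa using Real.exp_le_exp.2 h)

lemma softplus_sub_le {s t : ℝ} (h : s ≤ t) : softplus t - softplus s ≤ t - s := by
  have h1 : 1 + Real.exp t ≤ Real.exp (t - s) * (1 + Real.exp s) := by
    have he : 1 ≤ Real.exp (t - s) := Real.one_le_exp (by linarith)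
    have : Real.exp (t - s) * Real.exp s = Real.exp t := by
      rw [← Real.exp_add]; ring_nf
    nlinarith [Real.exp_pos s]
  have := Real.log_le_log (one_add_exp_pos t) h1
  rw [Real.log_mul (Real.exp_ne_zero _) (one_add_exp_pos s).ne', Real.log_exp] at this
  unfold softplus; linarith

lemma softplus_lip (s t : ℝ) : |softplus t - softplus s| ≤ |t - s| := by
  rcases le_total s t with h | h
  · rw [abs_of_nonneg (by linarith [softplus_mono h]), abs_of_nonneg (by linarith)]
    exact softplus_sub_le h
  · rw [abs_of_nonpos (by linarith [softplus_mono h]), abs_of_nonpos (by linarith)]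
    have := softplus_sub_le h; linarith

lemma softplus_le_two_mul {L t : ℝ} (hL : 1 ≤ L) (ht : |t| ≤ L) : softplus t ≤ 2 * L := by
  have h1 : softplus t ≤ softplus L := softplus_mono (abs_le.1 ht).2
  have h2 : softplus L ≤ Real.log (2 * Real.exp L) := by
    apply Real.log_le_log (one_add_exp_pos L)
    nlinarith [Real.one_le_exp (by linarith : (0:ℝ) ≤ L)]
  rw [Real.log_mul two_ne_zero (Real.exp_ne_zero _), Real.log_exp] at h2
  have : Real.log 2 ≤ 1 := by
    have := Real.log_le_sub_one_of_pos (by norm_num : (0:ℝ) < 2); linarith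
  linarith

lemma lCE_eq (t : ℝ) (b : Bool) :
    lCE t (bval b) = if b then softplus (-t) else softplus t := by
  have hpos : 0 < 1 + Real.exp (-t) := one_add_exp_pos _
  have hσ : Real.log (_root_.sigmoid t) = -softplus (-t) := by
    unfold _root_.sigmoid softplus
    rw [one_div, Real.log_inv]
  have h1σ : 1 - _root_.sigmoid t = 1 / (1 + Real.exp t) := by
    unfold _root_.sigmoid
    have h2 : 0 < 1 + Real.exp t := one_add_exp_pos t
    have he : Real.exp (-t) * Real.exp t = 1 := by rw [← Real.exp_add]; simp
    field_simp
    nlinarith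
  have h2 : Real.log (1 - _root_.sigmoid t) = -softplus t := by
    rw [h1σ, one_div, Real.log_inv]; rfl
  unfold lCE bval
  cases b <;> simp [hσ, h2]

lemma lCE_nonneg (t : ℝ) (b : Bool) : 0 ≤ lCE t (bval b) := by
  rw [lCE_eq]; cases b <;> simp [softplus_nonneg]

lemma lCE_le_two_mul {L t : ℝ} (hL : 1 ≤ L) (ht : |t| ≤ L) (b : Bool) :
    lCE t (bval b) ≤ 2 * L := by
  rw [lCE_eq]
  cases b
  · simpa using softplus_le_two_mul hL ht
  · simpa using softplus_le_two_mul hL (by simpa [abs_neg] using ht)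

lemma lCE_lip (t t' : ℝ) (b : Bool) : |lCE t (bval b) - lCE t' (bval b)| ≤ |t - t'| := by
  rw [lCE_eq, lCE_eq]
  cases b
  · simpa using softplus_lip t' t
  · simp only [if_true]
    calc |softplus (-t) - softplus (-t')| ≤ |(-t) - (-t')| := softplus_lip _ _
      _ = |t - t'| := by rw [← abs_neg]; ring_nf

lemma loss_measurable {X : Type*} [MeasurableSpace X] {g : X → ℝ} (hg : Measurable g) :
    Measurable fun p : X × Bool => lCE (g p.1) (bval p.2) := by
  simp only [lCE_eq]
  refine Measurable.ite (p := fun p : X × Bool => p.2 = true)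
    (measurable_snd (measurableSet_singleton true)) ?_ ?_
  · exact continuous_softplus.measurable.comp (hg.comp measurable_fst).neg
  · exact continuous_softplus.measurable.comp (hg.comp measurable_fst)

lemma integrable_of_bdd {Ω : Type*} [MeasurableSpace Ω] {ν : Measure Ω} [IsProbabilityMeasure ν]
    {W : Ω → ℝ} (hW : Measurable W) {M : ℝ} (hb : ∀ ω, |W ω| ≤ M) : Integrable W ν := by
  refine (integrable_const M).mono' hW.aestronglyMeasurable ?_
  exact Filter.Eventually.of_forall fun ω => by simpa using hb ω

lemma integrable_exp_of_bdd {Ω : Type*} [MeasurableSpace Ω] {ν : Measure Ω}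
    [IsProbabilityMeasure ν]
    {W : Ω → ℝ} (hW : Measurable W) {M : ℝ} (hb : ∀ ω, |W ω| ≤ M) (t : ℝ) :
    Integrable (fun ω => Real.exp (t * W ω)) ν := by
  refine integrable_of_bdd (by fun_prop) (M := Real.exp (|t| * M)) fun ω => ?_
  rw [abs_of_nonneg (Real.exp_pos _).le, Real.exp_le_exp]
  calc t * W ω ≤ |t * W ω| := le_abs_self _
    _ = |t| * |W ω| := abs_mul _ _
    _ ≤ |t| * M := by have := hb ω; have := abs_nonneg t; nlinarith

lemma hoeffding_mgf {Ω : Type*} [MeasurableSpace Ω] (ν : Measure Ω) [IsProbabilityMeasure ν]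
    (W : Ω → ℝ) (hW : Measurable W) (M : ℝ) (hM : 0 < M) (hb : ∀ ω, |W ω| ≤ M)
    (hmean : ∫ ω, W ω ∂ν = 0) (t : ℝ) :
    ∫ ω, Real.exp (t * W ω) ∂ν ≤ Real.exp (t ^ 2 * M ^ 2 / 2) := by
  have hWint : Integrable W ν := integrable_of_bdd hW hb
  have hpt : ∀ ω, Real.exp (t * W ω) ≤
      (M - W ω) / (2 * M) * Real.exp (t * (-M)) + (M + W ω) / (2 * M) * Real.exp (t * M) := by
    intro ω
    have hw := abs_le.1 (hb ω)
    have ha : (0:ℝ) ≤ (M - W ω) / (2 * M) := by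
      apply div_nonneg <;> linarith
    have hb' : (0:ℝ) ≤ (M + W ω) / (2 * M) := by
      apply div_nonneg <;> linarith
    have hab : (M - W ω) / (2 * M) + (M + W ω) / (2 * M) = 1 := by
      rw [← add_div, div_eq_one_iff_eq (by positivity)]; ring
    have key := convexOn_exp.2 (Set.mem_univ (t * (-M))) (Set.mem_univ (t * M)) ha hb' hab
    simp only [smul_eq_mul] at key
    have harg : (M - W ω) / (2 * M) * (t * -M) + (M + W ω) / (2 * M) * (t * M) = t * W ω := by
      rw [div_mul_eq_mul_div, div_mul_eq_mul_div, ← add_div,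
        div_eq_iff (by positivity : (2:ℝ) * M ≠ 0)]
      ring
    rw [harg] at key
    exact key
  have hExpInt : Integrable (fun ω => Real.exp (t * W ω)) ν := integrable_exp_of_bdd hW hb t
  have hi1 : Integrable (fun ω => (M - W ω) / (2 * M)) ν :=
    ((integrable_const M).sub hWint).div_const _
  have hi2 : Integrable (fun ω => (M + W ω) / (2 * M)) ν :=
    ((integrable_const M).add hWint).div_const _
  have hRHSint : Integrable (fun ω =>
      (M - W ω) / (2 * M) * Real.exp (t * (-M)) + (M + W ω) / (2 * M) * Real.exp (t * M)) ν :=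
    (hi1.mul_const _).add (hi2.mul_const _)
  have hint := integral_mono hExpInt hRHSint hpt
  have h1 : ∫ ω, (M - W ω) / (2 * M) ∂ν = 1 / 2 := by
    simp_rw [sub_div]
    rw [integral_sub ((integrable_const M).div_const _) (hWint.div_const _),
      integral_div, integral_div, hmean, integral_const]
    simp only [measure_univ, probReal_univ, one_smul, zero_div, sub_zero]
    rw [div_eq_div_iff (by positivity) (by norm_num : (2:ℝ) ≠ 0)]
    ring
  have h2 : ∫ ω, (M + W ω) / (2 * M) ∂ν = 1 / 2 := by
    simp_rw [add_div]
    rw [integral_add ((integrable_const M).div_const _) (hWint.div_const _),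
      integral_div, integral_div, hmean, integral_const]
    simp only [measure_univ, probReal_univ, one_smul, zero_div, add_zero]
    rw [div_eq_div_iff (by positivity) (by norm_num : (2:ℝ) ≠ 0)]
    ring
  have hR : ∫ ω, ((M - W ω) / (2 * M) * Real.exp (t * (-M))
        + (M + W ω) / (2 * M) * Real.exp (t * M)) ∂ν
      = Real.cosh (t * M) := by
    rw [integral_add (hi1.mul_const _) (hi2.mul_const _), integral_mul_const, integral_mul_const,
      h1, h2, Real.cosh_eq, mul_neg]
    ring
  rw [hR] at hint
  refine hint.trans ((Real.cosh_le_exp_half_sq _).trans (le_of_eq ?_))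
  congr 1
  ring

lemma tail_bound {Y : Type*} [MeasurableSpace Y] (ν : Measure Y) [IsProbabilityMeasure ν]
    (B : ℕ) (hB : 1 ≤ B) (ℓ : Y → ℝ) (hm : Measurable ℓ) (M : ℝ) (hM : 0 < M)
    (h0 : ∀ ω, 0 ≤ ℓ ω) (h1 : ∀ ω, ℓ ω ≤ M) (ε : ℝ) (hε : 0 < ε) :
    ((Measure.pi fun _ : Fin B => ν)
      {s : Fin B → Y | ε ≤ (∫ ω, ℓ ω ∂ν) - (1/(B:ℝ)) * ∑ i, ℓ (s i)}).toReal
      ≤ Real.exp (-(B:ℝ) * ε^2 / (2*M^2)) := by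
  have hB0 : (0:ℝ) < (B:ℝ) := by exact_mod_cast hB
  set m : ℝ := ∫ ω, ℓ ω ∂ν with hmdef
  have hℓb : ∀ ω, |ℓ ω| ≤ M := fun ω => abs_le.2 ⟨by linarith [h0 ω], h1 ω⟩
  have hℓint : Integrable ℓ ν := integrable_of_bdd hm hℓb
  have hm0 : 0 ≤ m := integral_nonneg h0
  have hmM : m ≤ M := by
    calc m ≤ ∫ _, M ∂ν := integral_mono hℓint (integrable_const M) h1
      _ = M := by simp
  set W : Y → ℝ := fun ω => m - ℓ ω with hWdef
  have hWmeas : Measurable W := measurable_const.sub hm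
  have hWb : ∀ ω, |W ω| ≤ M := fun ω =>
    abs_le.2 ⟨by simp [W]; linarith [h1 ω], by simp [W]; linarith [h0 ω]⟩
  have hWmean : ∫ ω, W ω ∂ν = 0 := by
    simp only [W]
    rw [integral_sub (integrable_const m) hℓint, integral_const]
    simp [hmdef]
  set Z : (Fin B → Y) → ℝ := fun s => ∑ i, W (s i) with hZdef
  have hZmeas : Measurable Z := by
    apply Finset.measurable_sum
    exact fun i _ => hWmeas.comp (measurable_pi_apply i)
  have hZb : ∀ s, |Z s| ≤ (B:ℝ) * M := by
    intro s
    calc |Z s| ≤ ∑ i, |W (s i)| := Finset.abs_sum_le_sum_abs _ _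
      _ ≤ ∑ _i : Fin B, M := Finset.sum_le_sum fun i _ => hWb _
      _ = (B:ℝ) * M := by simp [mul_comm]
  have hBinv : (B:ℝ) * (1/(B:ℝ)) = 1 := by field_simp
  have hset : {s : Fin B → Y | ε ≤ m - (1/(B:ℝ)) * ∑ i, ℓ (s i)}
      = {s : Fin B → Y | (B:ℝ) * ε ≤ Z s} := by
    ext s
    simp only [Set.mem_setOf_eq, Z, W]
    rw [Finset.sum_sub_distrib, Finset.sum_const, Finset.card_univ, Fintype.card_fin,
      nsmul_eq_mul]
    have hexp : (B:ℝ)*(m - 1/(B:ℝ) * ∑ i, ℓ (s i)) = (B:ℝ)*m - ∑ i, ℓ (s i) := by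
      field_simp
    constructor
    · intro h
      have := mul_le_mul_of_nonneg_left h hB0.le
      linarith [hexp ▸ this]
    · intro h
      have h2 := mul_le_mul_of_nonneg_left h (by positivity : (0:ℝ) ≤ 1/(B:ℝ))
      have e1 : (1/(B:ℝ)) * ((B:ℝ)*ε) = ε := by field_simp
      have e2 : (1/(B:ℝ)) * ((B:ℝ)*m - ∑ i, ℓ (s i)) = m - (1/(B:ℝ)) * ∑ i, ℓ (s i) := by
        field_simp
      linarith [e1 ▸ e2 ▸ h2]
  rw [hset]
  set t : ℝ := ε / M^2 with htdef
  have ht : 0 < t := by positivity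
  have hZint : Integrable (fun s => Real.exp (t * Z s)) (Measure.pi fun _ : Fin B => ν) :=
    integrable_exp_of_bdd hZmeas hZb t
  have chernoff := measure_ge_le_exp_mul_mgf (μ := Measure.pi fun _ : Fin B => ν) (X := Z)
    ((B:ℝ) * ε) ht.le hZint
  have hmgf : mgf Z (Measure.pi fun _ : Fin B => ν) t = (∫ ω, Real.exp (t * W ω) ∂ν) ^ B := by
    letI : MeasureSpace Y := ⟨ν⟩
    have hvol : (Measure.pi fun _ : Fin B => ν) = (volume : Measure (Fin B → Y)) :=
      (volume_pi).symm
    rw [mgf]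
    calc ∫ s, Real.exp (t * Z s) ∂(Measure.pi fun _ : Fin B => ν)
        = ∫ s : Fin B → Y, ∏ i, Real.exp (t * W (s i)) := by
          rw [hvol]
          congr 1
          ext s
          rw [← Real.exp_sum, Finset.mul_sum]
      _ = (∫ ω, Real.exp (t * W ω) ∂ν) ^ B := by
          rw [← hvol, MeasureTheory.integral_fintype_prod_eq_pow (fun ω => Real.exp (t * W ω)),
            Fintype.card_fin]
  have hhoef := hoeffding_mgf ν W hWmeas M hM hWb hWmean t
  have hpow : (∫ ω, Real.exp (t * W ω) ∂ν) ^ B ≤ Real.exp (t^2 * M^2 / 2) ^ B :=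
    pow_le_pow_left₀ (integral_nonneg fun ω => (Real.exp_pos _).le) hhoef _
  calc ((Measure.pi fun _ : Fin B => ν) {s : Fin B → Y | (B:ℝ)*ε ≤ Z s}).toReal
      ≤ Real.exp (-t * ((B:ℝ)*ε)) * mgf Z (Measure.pi fun _ : Fin B => ν) t := chernoff
    _ ≤ Real.exp (-t * ((B:ℝ)*ε)) * Real.exp (t^2 * M^2 / 2) ^ B := by
        rw [hmgf]; exact mul_le_mul_of_nonneg_left hpow (Real.exp_pos _).le
    _ = Real.exp (-(B:ℝ) * ε^2 / (2*M^2)) := by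
        rw [← Real.exp_nat_mul, ← Real.exp_add]
        congr 1
        have hM2 : (M:ℝ)^2 ≠ 0 := by positivity
        rw [htdef]
        field_simp
        ring

end Aux

theorem ce_generalization_bound :
    ∃ C : ℝ, 0 < C ∧
      ∀ (X : Type) [MeasurableSpace X], ∀ (B : ℕ), 1 ≤ B →
      ∀ (L : ℝ), 1 ≤ L →
      ∀ (ν : Measure (X × Bool)) [IsProbabilityMeasure ν],
      ∀ (F : Set (X → ℝ)), F.Nonempty → F.Countable →
        (∀ f ∈ F, Measurable f) → (∀ f ∈ F, ∀ x, |f x| ≤ L) →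
      ∀ (μbar : ℝ), 0 < μbar →
      ∀ (N : ℕ), 1 ≤ N →
      ∀ (G : Finset (X → ℝ)),
        (∀ g ∈ G, Measurable g) → (∀ g ∈ G, ∀ x, |g x| ≤ L) →
        G.card ≤ N →
        (∀ f ∈ F, ∃ g ∈ G, ∀ x, |f x - g x| ≤ μbar) →
      ∀ δ : ℝ, 0 < δ → δ < 1 →
        ENNReal.ofReal (1 - δ) ≤
          (Measure.pi fun _ : Fin B => ν)
            {s : Fin B → X × Bool |
              ∀ f ∈ F,
                ∫ p, lCE (f p.1) (bval p.2) ∂ν ≤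
                  (1 / (B : ℝ)) * ∑ i : Fin B, lCE (f (s i).1) (bval (s i).2)
                    + 2 * (μbar + L * Real.sqrt (2 * Real.log (N : ℝ) / (B : ℝ)))
                    + C * L * Real.sqrt (Real.log (1 / δ) / (B : ℝ))} := by
  refine ⟨3, by norm_num, ?_⟩
  intro X _ B hB L hL ν _ F hFne hFcount hFmeas hFbdd μbar hμ N hN G hGmeas hGbdd hGcard hcover
    δ hδ0 hδ1
  have hB0 : (0:ℝ) < (B:ℝ) := by exact_mod_cast hB
  have hN0 : (0:ℝ) < (N:ℝ) := by exact_mod_cast hN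
  have hL0 : (0:ℝ) < L := by linarith
  set μpi := (Measure.pi fun _ : Fin B => ν) with hμpi
  set ℓ : (X → ℝ) → (X × Bool) → ℝ := fun g p => lCE (g p.1) (bval p.2) with hℓdef
  have hlogN : 0 ≤ Real.log (N:ℝ) := Real.log_nonneg (by exact_mod_cast hN)
  have hlogδ : 0 < Real.log (1/δ) := Real.log_pos (by rw [lt_div_iff₀ hδ0]; linarith)
  set ε₁ : ℝ := 2 * L * Real.sqrt (2 * Real.log (N:ℝ) / (B:ℝ)) with hε₁def
  set ε₂ : ℝ := 3 * L * Real.sqrt (Real.log (1/δ) / (B:ℝ)) with hε₂def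
  have hε₁0 : 0 ≤ ε₁ := by positivity
  have hε₂0 : 0 < ε₂ := by
    apply mul_pos (by positivity)
    exact Real.sqrt_pos.2 (by positivity)
  set ε : ℝ := ε₁ + ε₂ with hεdef
  have hε0 : 0 < ε := by linarith
  set Bad : (X → ℝ) → Set (Fin B → X × Bool) :=
    fun g => {s | ε ≤ (∫ p, ℓ g p ∂ν) - (1/(B:ℝ)) * ∑ i, ℓ g (s i)} with hBaddef
  -- each bad event is small
  have hbad : ∀ g ∈ G, μpi (Bad g) ≤ ENNReal.ofReal (δ / N) := by
    intro g hg
    have hmeas := loss_measurable (hGmeas g hg)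
    have htb := tail_bound ν B hB (ℓ g) hmeas (2*L) (by linarith)
      (fun p => lCE_nonneg _ _) (fun p => lCE_le_two_mul hL (hGbdd g hg p.1) p.2) ε hε0
    have hexp : Real.exp (-(B:ℝ) * ε^2 / (2*(2*L)^2)) ≤ δ / N := by
      have hε₁sq : ε₁^2 = 4 * L^2 * (2 * Real.log (N:ℝ) / (B:ℝ)) := by
        rw [hε₁def, mul_pow, mul_pow, Real.sq_sqrt (by positivity)]
        ring
      have hε₂sq : ε₂^2 = 9 * L^2 * (Real.log (1/δ) / (B:ℝ)) := by
        rw [hε₂def, mul_pow, mul_pow, Real.sq_sqrt (by positivity)]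
        ring
      have hεsq : ε₁^2 + ε₂^2 ≤ ε^2 := by
        rw [hεdef]
        nlinarith [mul_nonneg hε₁0 hε₂0.le]
      have harg : -(B:ℝ) * ε^2 / (2*(2*L)^2) ≤
          -Real.log (N:ℝ) - Real.log (1/δ) := by
        rw [div_le_iff₀ (by positivity : (0:ℝ) < 2*(2*L)^2)]
        have expand : (-Real.log (N:ℝ) - Real.log (1/δ)) * (2*(2*L)^2)
            = -(B:ℝ) * (ε₁^2 + ε₂^2) + (B:ℝ) * ε₂^2 / 9 := by
          rw [hε₁sq, hε₂sq]
          field_simp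
          ring
        nlinarith [mul_le_mul_of_nonneg_left hεsq hB0.le,
          mul_pos hB0 (by positivity : (0:ℝ) < ε₂^2)]
      calc Real.exp (-(B:ℝ) * ε^2 / (2*(2*L)^2))
          ≤ Real.exp (-Real.log (N:ℝ) - Real.log (1/δ)) := Real.exp_le_exp.2 harg
        _ = δ / N := by
            rw [Real.exp_sub, Real.exp_neg, Real.exp_log hN0, Real.exp_log (by positivity)]
            field_simp
    have hfin : μpi (Bad g) ≠ ⊤ := measure_ne_top _ _
    rw [← ENNReal.ofReal_toReal hfin]
    exact ENNReal.ofReal_le_ofReal (htb.trans hexp)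
  -- the union of bad events
  set U : Set (Fin B → X × Bool) := ⋃ g ∈ G, Bad g with hUdef
  have hUmeas : MeasurableSet U := by
    refine Finset.measurableSet_biUnion _ fun g hg => ?_
    have h1 : Measurable fun s : Fin B → X × Bool => ∑ i, ℓ g (s i) :=
      Finset.measurable_sum _ fun i _ =>
        (loss_measurable (hGmeas g hg)).comp (measurable_pi_apply i)
    exact measurableSet_le measurable_const
      (measurable_const.sub (h1.const_mul _))
  have hUbound : μpi U ≤ ENNReal.ofReal δ := by
    calc μpi U ≤ ∑ g ∈ G, μpi (Bad g) := measure_biUnion_finset_le _ _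
      _ ≤ ∑ g ∈ G, ENNReal.ofReal (δ / N) := Finset.sum_le_sum hbad
      _ = (G.card : ENNReal) * ENNReal.ofReal (δ / N) := by
          rw [Finset.sum_const, nsmul_eq_mul]
      _ ≤ (N : ENNReal) * ENNReal.ofReal (δ / N) := by
          have : (G.card : ENNReal) ≤ (N : ENNReal) := by exact_mod_cast hGcard
          exact mul_le_mul_left this _
      _ = ENNReal.ofReal δ := by
          rw [← ENNReal.ofReal_natCast, ← ENNReal.ofReal_mul (by positivity)]
          congr 1
          field_simp
  -- complement of U is contained in the good event
  have hsubset : Uᶜ ⊆ {s : Fin B → X × Bool |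
      ∀ f ∈ F,
        ∫ p, lCE (f p.1) (bval p.2) ∂ν ≤
          (1 / (B : ℝ)) * ∑ i : Fin B, lCE (f (s i).1) (bval (s i).2)
            + 2 * (μbar + L * Real.sqrt (2 * Real.log (N : ℝ) / (B : ℝ)))
            + ε₂} := by
    intro s hs f hf
    obtain ⟨g, hg, hfg⟩ := hcover f hf
    have hsg : ¬ (ε ≤ (∫ p, ℓ g p ∂ν) - (1/(B:ℝ)) * ∑ i, ℓ g (s i)) := by
      intro hcon
      exact hs (Set.mem_biUnion hg hcon)
    push_neg at hsg
    have hlip : ∀ p : X × Bool, |ℓ f p - ℓ g p| ≤ μbar := fun p =>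
      (lCE_lip (f p.1) (g p.1) p.2).trans (hfg p.1)
    have hfint : Integrable (ℓ f) ν := integrable_of_bdd (loss_measurable (hFmeas f hf))
      (M := 2*L) fun p => abs_le.2
        ⟨by linarith [lCE_nonneg (f p.1) p.2], lCE_le_two_mul hL (hFbdd f hf p.1) p.2⟩
    have hgint : Integrable (ℓ g) ν := integrable_of_bdd (loss_measurable (hGmeas g hg))
      (M := 2*L) fun p => abs_le.2
        ⟨by linarith [lCE_nonneg (g p.1) p.2], lCE_le_two_mul hL (hGbdd g hg p.1) p.2⟩
    have hint_le : ∫ p, ℓ f p ∂ν ≤ (∫ p, ℓ g p ∂ν) + μbar := by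
      have : ∫ p, ℓ f p ∂ν ≤ ∫ p, (ℓ g p + μbar) ∂ν := by
        apply integral_mono hfint (hgint.add (integrable_const _))
        intro p
        have h := abs_le.1 (hlip p)
        show ℓ f p ≤ ℓ g p + μbar
        linarith [h.2]
      rwa [integral_add hgint (integrable_const _), integral_const, probReal_univ,
        one_smul] at this
    have hsum_le : (1/(B:ℝ)) * ∑ i, ℓ g (s i) ≤ (1/(B:ℝ)) * ∑ i, ℓ f (s i) + μbar := by
      have hsum : ∑ i, ℓ g (s i) ≤ ∑ i, (ℓ f (s i) + μbar) := by
        apply Finset.sum_le_sum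
        intro i _
        have := abs_le.1 (hlip (s i))
        linarith [this.1]
      rw [Finset.sum_add_distrib, Finset.sum_const, Finset.card_univ, Fintype.card_fin,
        nsmul_eq_mul] at hsum
      have := mul_le_mul_of_nonneg_left hsum (by positivity : (0:ℝ) ≤ 1/(B:ℝ))
      have hBinv : (1/(B:ℝ)) * ((B:ℝ) * μbar) = μbar := by field_simp
      rw [mul_add, hBinv] at this
      linarith
    have goal_eq : (1 / (B : ℝ)) * ∑ i : Fin B, lCE (f (s i).1) (bval (s i).2)
        = (1/(B:ℝ)) * ∑ i, ℓ f (s i) := rfl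
    rw [goal_eq]
    have : ∫ p, lCE (f p.1) (bval p.2) ∂ν = ∫ p, ℓ f p ∂ν := rfl
    rw [this]
    linarith [hεdef, hε₁def]
  calc ENNReal.ofReal (1 - δ) = 1 - ENNReal.ofReal δ := by
        rw [ENNReal.ofReal_sub _ hδ0.le, ENNReal.ofReal_one]
    _ ≤ 1 - μpi U := tsub_le_tsub_left hUbound 1
    _ = μpi Uᶜ := (prob_compl_eq_one_sub hUmeas).symm
    _ ≤ _ := measure_mono hsubset
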